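/- Let a : ℝ → ℝ be bounded, uniformly elliptic, and η-Hölder continuous for some η ∈ (0,1], and let q̄^y_t(x,z) = g(a(y)t, z-x) - g(a(y)t, z+x-2L) for x,z ≤ L. Then there exists C > 0 such that for all x, z ≤ L and t ∈ (0, T]: ∫_{-∞}^{L} |q̄^z_t(x,z) - q̄^x_t(x,z)| dz ≤ C t^{η/2}. -/

import Mathlib

open MeasureTheory

/-- Gaussian heat kernel `g(c,u) = (2πc)^{-1/2} exp(-u²/(2c))`. -/
noncomputable def gk (c u : ℝ) : ℝ :=
  (2 * Real.pi * c) ^ (-(1 : ℝ) / 2) * Real.exp (-u ^ 2 / (2 * c))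

/-- Dominating function for the `c`-derivative of `gk` on `[a₁ t, a₂ t]`. -/
noncomputable def Fb (a₁ a₂ t u : ℝ) : ℝ :=
  (2 * Real.pi * (a₁ * t)) ^ (-(1 : ℝ) / 2) * Real.exp (-u ^ 2 / (2 * (a₂ * t)))
    * (u ^ 2 / (2 * (a₁ * t) ^ 2) + 1 / (2 * (a₁ * t)))

/-- The full dominating profile `|u|^η · Fb`. -/
noncomputable def fb (a₁ a₂ η t u : ℝ) : ℝ := |u| ^ η * Fb a₁ a₂ t u

lemma Fb_nonneg {a₁ a₂ t : ℝ} (ha₁ : 0 < a₁) (ht : 0 < t) (u : ℝ) :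
    0 ≤ Fb a₁ a₂ t u := by
  unfold Fb; positivity

lemma fb_nonneg {a₁ a₂ η t : ℝ} (ha₁ : 0 < a₁) (ht : 0 < t) (u : ℝ) :
    0 ≤ fb a₁ a₂ η t u :=
  mul_nonneg (Real.rpow_nonneg (abs_nonneg u) η) (Fb_nonneg ha₁ ht u)

/-- integrability of `|u|^η (A u² + B) e^{-γ u²}`. -/
lemma aux_integrable {γ η A B : ℝ} (hA : 0 ≤ A) (hB : 0 ≤ B) (hγ : 0 < γ)
    (hη0 : 0 < η) (hη1 : η ≤ 1) :
    Integrable (fun u : ℝ => |u| ^ η * (A * u ^ 2 + B) * Real.exp (-γ * u ^ 2)) := by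
  have hE : Integrable (fun x : ℝ => Real.exp (-γ * x ^ 2)) := integrable_exp_neg_mul_sq hγ
  have h2 : Integrable (fun x : ℝ => x ^ 2 * Real.exp (-γ * x ^ 2)) := by
    have := integrable_rpow_mul_exp_neg_mul_sq hγ (show (-1 : ℝ) < 2 by norm_num)
    refine this.congr (Filter.Eventually.of_forall fun u => ?_)
    simp [Real.rpow_two]
  have h4 : Integrable (fun x : ℝ => x ^ 4 * Real.exp (-γ * x ^ 2)) := by
    have := integrable_rpow_mul_exp_neg_mul_sq hγ (show (-1 : ℝ) < 4 by norm_num)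
    refine this.congr (Filter.Eventually.of_forall fun u => ?_)
    show u ^ (4 : ℝ) * Real.exp (-γ * u ^ 2) = u ^ (4 : ℕ) * Real.exp (-γ * u ^ 2)
    rw [← Real.rpow_natCast u 4]
    norm_num
  have hg : Integrable
      (fun u : ℝ => (A * u ^ 4 + (A + B) * u ^ 2 + B) * Real.exp (-γ * u ^ 2)) := by
    have := ((h4.const_mul A).add (h2.const_mul (A + B))).add (hE.const_mul B)
    refine this.congr (Filter.Eventually.of_forall fun u => ?_)
    simp only [Pi.add_apply]
    ring
  refine hg.mono' ?_ (Filter.Eventually.of_forall fun u => ?_)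
  · apply Continuous.aestronglyMeasurable
    exact ((continuous_abs.rpow_const fun x => Or.inr hη0.le).mul
      (by continuity)).mul (by continuity)
  · have hb : |u| ^ η ≤ 1 + u ^ 2 := by
      rcases le_or_gt (|u|) 1 with h | h
      · have := Real.rpow_le_one (abs_nonneg u) h hη0.le
        nlinarith [sq_nonneg u]
      · have h1 : |u| ^ η ≤ |u| ^ (1 : ℝ) := Real.rpow_le_rpow_of_exponent_le h.le hη1
        rw [Real.rpow_one] at h1
        nlinarith [sq_abs u, abs_nonneg u]
    have hAB : 0 ≤ A * u ^ 2 + B := by positivity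
    have hEpos : 0 ≤ Real.exp (-γ * u ^ 2) := (Real.exp_pos _).le
    rw [Real.norm_eq_abs, abs_of_nonneg (by positivity)]
    calc |u| ^ η * (A * u ^ 2 + B) * Real.exp (-γ * u ^ 2)
        ≤ (1 + u ^ 2) * (A * u ^ 2 + B) * Real.exp (-γ * u ^ 2) :=
          mul_le_mul_of_nonneg_right (mul_le_mul_of_nonneg_right hb hAB) hEpos
      _ = (A * u ^ 4 + (A + B) * u ^ 2 + B) * Real.exp (-γ * u ^ 2) := by ring

lemma fb_integrable {a₁ a₂ η t : ℝ} (ha₁ : 0 < a₁) (ha₂ : 0 < a₂) (ht : 0 < t)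
    (hη0 : 0 < η) (hη1 : η ≤ 1) : Integrable (fun u => fb a₁ a₂ η t u) := by
  have hπ := Real.pi_pos
  have key := aux_integrable
    (A := (2 * Real.pi * (a₁ * t)) ^ (-(1 : ℝ) / 2) / (2 * (a₁ * t) ^ 2))
    (B := (2 * Real.pi * (a₁ * t)) ^ (-(1 : ℝ) / 2) / (2 * (a₁ * t)))
    (γ := 1 / (2 * (a₂ * t))) (by positivity) (by positivity) (by positivity) hη0 hη1
  refine key.congr (Filter.Eventually.of_forall fun u => ?_)
  simp only [fb, Fb]
  rw [show -(1 / (2 * (a₂ * t))) * u ^ 2 = -u ^ 2 / (2 * (a₂ * t)) by ring]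
  ring

/-- derivative of `c ↦ gk c u`. -/
lemma gk_hasDerivAt (u : ℝ) {c : ℝ} (hc : 0 < c) :
    HasDerivAt (fun c => gk c u)
      (gk c u * (u ^ 2 / (2 * c ^ 2) - 1 / (2 * c))) c := by
  have hπ := Real.pi_pos
  have h2πc : (0 : ℝ) < 2 * Real.pi * c := by positivity
  have hA : HasDerivAt (fun c : ℝ => (2 * Real.pi * c) ^ (-(1 : ℝ) / 2))
      ((2 * Real.pi) * (-(1 : ℝ) / 2) * (2 * Real.pi * c) ^ (-(1 : ℝ) / 2 - 1)) c := by
    have h0 : HasDerivAt (fun c : ℝ => 2 * Real.pi * c) (2 * Real.pi) c := by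
      simpa using (hasDerivAt_id c).const_mul (2 * Real.pi)
    have := h0.rpow_const (p := -(1 : ℝ) / 2) (Or.inl h2πc.ne')
    exact this
  have hB : HasDerivAt (fun c : ℝ => Real.exp (-u ^ 2 / (2 * c)))
      (Real.exp (-u ^ 2 / (2 * c)) * (u ^ 2 / (2 * c ^ 2))) c := by
    have h2 : HasDerivAt (fun c : ℝ => c⁻¹) (-(c ^ 2)⁻¹) c := hasDerivAt_inv hc.ne'
    have h3 := h2.const_mul (-u ^ 2 / 2)
    have heq : (fun c : ℝ => -u ^ 2 / (2 * c)) = fun c : ℝ => -u ^ 2 / 2 * c⁻¹ := by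
      funext y; rw [div_mul_eq_div_div_swap, div_div]; ring_nf
    have h4 : HasDerivAt (fun c : ℝ => -u ^ 2 / (2 * c)) (u ^ 2 / (2 * c ^ 2)) c := by
      rw [heq]
      refine h3.congr_deriv ?_
      ring
    exact h4.exp
  have h := hA.mul hB
  have hkey : (2 * Real.pi * c) ^ (-(1 : ℝ) / 2 - 1)
      = (2 * Real.pi * c) ^ (-(1 : ℝ) / 2) / (2 * Real.pi * c) := by
    rw [Real.rpow_sub h2πc, Real.rpow_one]
  refine h.congr_deriv ?_
  symm
  unfold gk
  rw [hkey]
  field_simp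
  ring

/-- Bound on the derivative over the interval. -/
lemma gk_deriv_bound {a₁ a₂ t u c : ℝ} (ha₁ : 0 < a₁) (ht : 0 < t)
    (hc : c ∈ Set.Icc (a₁ * t) (a₂ * t)) :
    |gk c u * (u ^ 2 / (2 * c ^ 2) - 1 / (2 * c))| ≤ Fb a₁ a₂ t u := by
  have hπ := Real.pi_pos
  have ha₁t : 0 < a₁ * t := mul_pos ha₁ ht
  have hcpos : 0 < c := lt_of_lt_of_le ha₁t hc.1
  have ha₂t : 0 < a₂ * t := hcpos.trans_le hc.2
  have hgk : 0 ≤ gk c u := by unfold gk; positivity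
  have h1 : gk c u ≤ (2 * Real.pi * (a₁ * t)) ^ (-(1 : ℝ) / 2)
      * Real.exp (-u ^ 2 / (2 * (a₂ * t))) := by
    unfold gk
    have hr : (2 * Real.pi * c) ^ (-(1 : ℝ) / 2)
        ≤ (2 * Real.pi * (a₁ * t)) ^ (-(1 : ℝ) / 2) :=
      Real.rpow_le_rpow_of_nonpos (by positivity)
        (by nlinarith [hc.1, Real.pi_pos]) (by norm_num)
    have he : Real.exp (-u ^ 2 / (2 * c)) ≤ Real.exp (-u ^ 2 / (2 * (a₂ * t))) := by
      apply Real.exp_le_exp.2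
      rw [neg_div, neg_div, neg_le_neg_iff]
      apply div_le_div_of_nonneg_left (sq_nonneg u) (by linarith) (by linarith [hc.2])
    exact mul_le_mul hr he (Real.exp_nonneg _) (Real.rpow_nonneg (by positivity) _)
  have h2 : |u ^ 2 / (2 * c ^ 2) - 1 / (2 * c)|
      ≤ u ^ 2 / (2 * (a₁ * t) ^ 2) + 1 / (2 * (a₁ * t)) := by
    refine (abs_sub _ _).trans ?_
    rw [abs_of_nonneg (by positivity), abs_of_nonneg (by positivity)]
    have e1 : u ^ 2 / (2 * c ^ 2) ≤ u ^ 2 / (2 * (a₁ * t) ^ 2) :=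
      div_le_div_of_nonneg_left (sq_nonneg u) (by positivity) (by nlinarith [hc.1])
    have e2 : 1 / (2 * c) ≤ 1 / (2 * (a₁ * t)) :=
      div_le_div_of_nonneg_left (by norm_num) (by linarith) (by linarith [hc.1])
    linarith
  calc |gk c u * (u ^ 2 / (2 * c ^ 2) - 1 / (2 * c))|
      = gk c u * |u ^ 2 / (2 * c ^ 2) - 1 / (2 * c)| := by
        rw [abs_mul, abs_of_nonneg hgk]
    _ ≤ ((2 * Real.pi * (a₁ * t)) ^ (-(1 : ℝ) / 2)
          * Real.exp (-u ^ 2 / (2 * (a₂ * t))))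
        * (u ^ 2 / (2 * (a₁ * t) ^ 2) + 1 / (2 * (a₁ * t))) :=
        mul_le_mul h1 h2 (abs_nonneg _) (by positivity)
    _ = Fb a₁ a₂ t u := rfl

/-- Mean value estimate for the frozen kernels. -/
lemma gk_sub_le {a₁ a₂ t : ℝ} (u : ℝ) (ha₁ : 0 < a₁) (ht : 0 < t) {c c' : ℝ}
    (hc : c ∈ Set.Icc (a₁ * t) (a₂ * t)) (hc' : c' ∈ Set.Icc (a₁ * t) (a₂ * t)) :
    |gk c u - gk c' u| ≤ Fb a₁ a₂ t u * |c - c'| := by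
  have ha₁t : 0 < a₁ * t := mul_pos ha₁ ht
  have key := (convex_Icc (a₁ * t) (a₂ * t)).norm_image_sub_le_of_norm_hasDerivWithin_le
    (f := fun c => gk c u)
    (f' := fun c => gk c u * (u ^ 2 / (2 * c ^ 2) - 1 / (2 * c)))
    (fun y hy => (gk_hasDerivAt u (lt_of_lt_of_le ha₁t hy.1)).hasDerivWithinAt)
    (fun y hy => by rw [Real.norm_eq_abs]; exact gk_deriv_bound ha₁ ht hy)
    hc' hc
  rw [Real.norm_eq_abs, Real.norm_eq_abs] at key
  exact key

theorem frozen_kernel_difference_integral (L T η K a₁ a₂ : ℝ) (a : ℝ → ℝ)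
    (hη : η ∈ Set.Ioc (0 : ℝ) 1) (hT : 0 < T) (ha₁ : 0 < a₁)
    (hell : ∀ y, a₁ ≤ a y ∧ a y ≤ a₂) (hK : 0 < K)
    (hHolder : ∀ x y, |a x - a y| ≤ K * |x - y| ^ η) :
    ∃ C : ℝ, 0 < C ∧ ∀ x ≤ L, ∀ t ∈ Set.Ioc (0 : ℝ) T,
      (∫ z in Set.Iic L,
        |(gk (a z * t) (z - x) - gk (a z * t) (z + x - 2 * L))
          - (gk (a x * t) (z - x) - gk (a x * t) (z + x - 2 * L))|)
        ≤ C * t ^ (η / 2) := by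
  obtain ⟨hη0, hη1⟩ := hη
  have ha₂ : 0 < a₂ := ha₁.trans_le (le_trans (hell 0).1 (hell 0).2)
  set I : ℝ := ∫ v : ℝ, fb a₁ a₂ η 1 v with hI_def
  have hI0 : 0 ≤ I := integral_nonneg (fun v => fb_nonneg ha₁ one_pos v)
  refine ⟨2 * K * I + 1, by nlinarith, ?_⟩
  intro x hx t ht'
  obtain ⟨ht, htT⟩ := ht'
  have ha₁t : 0 < a₁ * t := mul_pos ha₁ ht
  have ha₂t : 0 < a₂ * t := mul_pos ha₂ ht
  -- scaling factor
  set s : ℝ := t ^ ((1 : ℝ) / 2) with hs_def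
  have hs : 0 < s := Real.rpow_pos_of_pos ht _
  have hs2 : s ^ 2 = t := by
    rw [hs_def, ← Real.rpow_natCast (t ^ ((1 : ℝ) / 2)) 2, ← Real.rpow_mul ht.le]
    norm_num
  have hsη : s ^ η = t ^ (η / 2) := by
    rw [hs_def, ← Real.rpow_mul ht.le]
    ring_nf
  -- pointwise scaling identity
  have hpt : ∀ v : ℝ, fb a₁ a₂ η t (s * v)
      = (s ^ η * t⁻¹ * s⁻¹) * fb a₁ a₂ η 1 v := by
    intro v
    have hπ := Real.pi_pos
    have hmul : (2 * Real.pi * (a₁ * t)) ^ (-(1 : ℝ) / 2)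
        = (2 * Real.pi * (a₁ * 1)) ^ (-(1 : ℝ) / 2) * s⁻¹ := by
      rw [show 2 * Real.pi * (a₁ * t) = (2 * Real.pi * (a₁ * 1)) * t by ring,
        Real.mul_rpow (by positivity) ht.le, hs_def,
        show (-(1 : ℝ) / 2) = -((1 : ℝ) / 2) by ring, Real.rpow_neg ht.le]
    have habs : |s * v| ^ η = s ^ η * |v| ^ η := by
      rw [abs_mul, abs_of_pos hs, Real.mul_rpow hs.le (abs_nonneg v)]
    have hexp : Real.exp (-(s * v) ^ 2 / (2 * (a₂ * t)))
        = Real.exp (-v ^ 2 / (2 * (a₂ * 1))) := by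
      congr 1
      rw [mul_pow, hs2]
      field_simp
    unfold fb Fb
    rw [habs, hexp, hmul, mul_pow, hs2]
    have ht0 : t ≠ 0 := ht.ne'
    have hs0 : s ≠ 0 := hs.ne'
    field_simp
  -- value of the scaled integral
  have hfint : Integrable (fun u => fb a₁ a₂ η t u) := fb_integrable ha₁ ha₂ ht hη0 hη1
  have hscale : (∫ u : ℝ, fb a₁ a₂ η t u) = t ^ (η / 2) * t⁻¹ * I := by
    have h1 : (∫ v : ℝ, fb a₁ a₂ η t (s * v))
        = |s⁻¹| • ∫ u : ℝ, fb a₁ a₂ η t u :=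
      MeasureTheory.Measure.integral_comp_mul_left (fun u => fb a₁ a₂ η t u) s
    have h2 : (∫ v : ℝ, fb a₁ a₂ η t (s * v))
        = (s ^ η * t⁻¹ * s⁻¹) * I := by
      simp_rw [hpt]
      rw [MeasureTheory.integral_const_mul, hI_def]
    rw [abs_of_pos (inv_pos.2 hs), smul_eq_mul] at h1
    have h3 : s⁻¹ * (∫ u : ℝ, fb a₁ a₂ η t u) = s⁻¹ * (s ^ η * t⁻¹ * I) := by
      rw [← h1, h2]; ring
    have := mul_left_cancel₀ (inv_ne_zero hs.ne') h3
    rw [this, hsη]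
  -- pointwise bound
  have hb : ∀ z ∈ Set.Iic L,
      |(gk (a z * t) (z - x) - gk (a z * t) (z + x - 2 * L))
        - (gk (a x * t) (z - x) - gk (a x * t) (z + x - 2 * L))|
      ≤ K * t * (fb a₁ a₂ η t (z - x) + fb a₁ a₂ η t (z + (x - 2 * L))) := by
    intro z hz
    have hmz : a z * t ∈ Set.Icc (a₁ * t) (a₂ * t) :=
      ⟨mul_le_mul_of_nonneg_right (hell z).1 ht.le,
       mul_le_mul_of_nonneg_right (hell z).2 ht.le⟩
    have hmx : a x * t ∈ Set.Icc (a₁ * t) (a₂ * t) :=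
      ⟨mul_le_mul_of_nonneg_right (hell x).1 ht.le,
       mul_le_mul_of_nonneg_right (hell x).2 ht.le⟩
    have hdiff : |a z * t - a x * t| ≤ K * |z - x| ^ η * t := by
      rw [show a z * t - a x * t = (a z - a x) * t by ring, abs_mul, abs_of_pos ht]
      exact mul_le_mul_of_nonneg_right (hHolder z x) ht.le
    have h1 := gk_sub_le (z - x) ha₁ ht hmz hmx
    have h2 := gk_sub_le (z + x - 2 * L) ha₁ ht hmz hmx
    have hF1 := Fb_nonneg (a₂ := a₂) ha₁ ht (z - x)
    have hF2 := Fb_nonneg (a₂ := a₂) ha₁ ht (z + x - 2 * L)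
    have h1' : |gk (a z * t) (z - x) - gk (a x * t) (z - x)|
        ≤ Fb a₁ a₂ t (z - x) * (K * |z - x| ^ η * t) :=
      h1.trans (mul_le_mul_of_nonneg_left hdiff hF1)
    have h2' : |gk (a z * t) (z + x - 2 * L) - gk (a x * t) (z + x - 2 * L)|
        ≤ Fb a₁ a₂ t (z + x - 2 * L) * (K * |z - x| ^ η * t) :=
      h2.trans (mul_le_mul_of_nonneg_left hdiff hF2)
    have htri : |(gk (a z * t) (z - x) - gk (a z * t) (z + x - 2 * L))
        - (gk (a x * t) (z - x) - gk (a x * t) (z + x - 2 * L))|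
        ≤ |gk (a z * t) (z - x) - gk (a x * t) (z - x)|
          + |gk (a z * t) (z + x - 2 * L) - gk (a x * t) (z + x - 2 * L)| := by
      rw [show (gk (a z * t) (z - x) - gk (a z * t) (z + x - 2 * L))
          - (gk (a x * t) (z - x) - gk (a x * t) (z + x - 2 * L))
          = (gk (a z * t) (z - x) - gk (a x * t) (z - x))
            - (gk (a z * t) (z + x - 2 * L) - gk (a x * t) (z + x - 2 * L)) by ring]
      exact abs_sub _ _
    have habs2 : |z - x| ^ η ≤ |z + x - 2 * L| ^ η := by
      apply Real.rpow_le_rpow (abs_nonneg _) _ hη0.le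
      rw [Set.mem_Iic] at hz
      rw [abs_le]
      constructor
      · rw [abs_of_nonpos (by linarith)]; linarith
      · rw [abs_of_nonpos (by linarith)]; linarith
    have hterm2 : Fb a₁ a₂ t (z + x - 2 * L) * (K * |z - x| ^ η * t)
        ≤ K * t * fb a₁ a₂ η t (z + x - 2 * L) := by
      unfold fb
      have : Fb a₁ a₂ t (z + x - 2 * L) * (K * |z - x| ^ η * t)
          ≤ Fb a₁ a₂ t (z + x - 2 * L) * (K * |z + x - 2 * L| ^ η * t) := by
        apply mul_le_mul_of_nonneg_left _ hF2
        have := mul_le_mul_of_nonneg_left habs2 hK.le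
        nlinarith
      linarith [this, (by ring : Fb a₁ a₂ t (z + x - 2 * L) * (K * |z + x - 2 * L| ^ η * t)
        = K * t * (|z + x - 2 * L| ^ η * Fb a₁ a₂ t (z + x - 2 * L)))]
    have hterm1 : Fb a₁ a₂ t (z - x) * (K * |z - x| ^ η * t)
        = K * t * fb a₁ a₂ η t (z - x) := by
      unfold fb; ring
    calc |(gk (a z * t) (z - x) - gk (a z * t) (z + x - 2 * L))
        - (gk (a x * t) (z - x) - gk (a x * t) (z + x - 2 * L))|
        ≤ |gk (a z * t) (z - x) - gk (a x * t) (z - x)|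
          + |gk (a z * t) (z + x - 2 * L) - gk (a x * t) (z + x - 2 * L)| := htri
      _ ≤ Fb a₁ a₂ t (z - x) * (K * |z - x| ^ η * t)
          + Fb a₁ a₂ t (z + x - 2 * L) * (K * |z - x| ^ η * t) := add_le_add h1' h2'
      _ ≤ K * t * fb a₁ a₂ η t (z - x) + K * t * fb a₁ a₂ η t (z + x - 2 * L) := by
          rw [hterm1]; linarith [hterm2]
      _ = K * t * (fb a₁ a₂ η t (z - x) + fb a₁ a₂ η t (z + (x - 2 * L))) := by
          rw [show z + x - 2 * L = z + (x - 2 * L) by ring]; ring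
  -- integrability of the dominating function
  have hint1 : Integrable (fun z : ℝ => fb a₁ a₂ η t (z - x)) := hfint.comp_sub_right x
  have hint2 : Integrable (fun z : ℝ => fb a₁ a₂ η t (z + (x - 2 * L))) :=
    hfint.comp_add_right (x - 2 * L)
  have hdom : Integrable
      (fun z : ℝ => K * t * (fb a₁ a₂ η t (z - x) + fb a₁ a₂ η t (z + (x - 2 * L)))) :=
    (hint1.add hint2).const_mul (K * t)
  -- main estimate
  calc (∫ z in Set.Iic L,
        |(gk (a z * t) (z - x) - gk (a z * t) (z + x - 2 * L))
          - (gk (a x * t) (z - x) - gk (a x * t) (z + x - 2 * L))|)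
      ≤ ∫ z in Set.Iic L,
          K * t * (fb a₁ a₂ η t (z - x) + fb a₁ a₂ η t (z + (x - 2 * L))) := by
        apply integral_mono_of_nonneg
          (Filter.Eventually.of_forall fun z => abs_nonneg _) hdom.restrict
        exact (ae_restrict_iff' measurableSet_Iic).2 (Filter.Eventually.of_forall hb)
    _ = K * t * ((∫ z in Set.Iic L, fb a₁ a₂ η t (z - x))
          + ∫ z in Set.Iic L, fb a₁ a₂ η t (z + (x - 2 * L))) := by
        rw [MeasureTheory.integral_const_mul,
          integral_add hint1.restrict hint2.restrict]
    _ ≤ K * t * ((∫ z : ℝ, fb a₁ a₂ η t (z - x))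
          + ∫ z : ℝ, fb a₁ a₂ η t (z + (x - 2 * L))) := by
        apply mul_le_mul_of_nonneg_left _ (mul_pos hK ht).le
        exact add_le_add
          (setIntegral_le_integral hint1
            (Filter.Eventually.of_forall fun z => fb_nonneg ha₁ ht _))
          (setIntegral_le_integral hint2
            (Filter.Eventually.of_forall fun z => fb_nonneg ha₁ ht _))
    _ = K * t * ((∫ u : ℝ, fb a₁ a₂ η t u) + ∫ u : ℝ, fb a₁ a₂ η t u) := by
        rw [integral_sub_right_eq_self (fun u => fb a₁ a₂ η t u) x,
          integral_add_right_eq_self (fun u => fb a₁ a₂ η t u) (x - 2 * L)]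
    _ = 2 * K * I * t ^ (η / 2) * (t * t⁻¹) := by rw [hscale]; ring
    _ = 2 * K * I * t ^ (η / 2) := by rw [mul_inv_cancel₀ ht.ne', mul_one]
    _ ≤ (2 * K * I + 1) * t ^ (η / 2) := by
        apply mul_le_mul_of_nonneg_right (by linarith) (Real.rpow_nonneg ht.le _)
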